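/- Let q ≥ 1 and suppose |f'|^q is preinvex on K. Then |(1/η(b,a)) ∫_a^{a+η(b,a)} f(x) dx − f((2a+η(b,a))/2)| ≤ (η(b,a)/8) [ ((2|f'(a)|^q + |f'(b)|^q)/3)^{1/q} + ((|f'(a)|^q + 2|f'(b)|^q)/3)^{1/q} ]. -/

import Mathlib

open MeasureTheory intervalIntegral


lemma holder_aux {q : ℝ} (hq : 1 < q) {c d : ℝ} (hcd : c ≤ d) {w G : ℝ → ℝ}
    (hw : Continuous w) (hG : Continuous G)
    (hw0 : ∀ t ∈ Set.Icc c d, 0 ≤ w t) (hG0 : ∀ t ∈ Set.Icc c d, 0 ≤ G t) :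
    ∫ t in c..d, w t * G t ≤
      (∫ t in c..d, w t) ^ (1 - 1/q) * (∫ t in c..d, w t * G t ^ q) ^ (1/q) := by
  have hq0 : (0:ℝ) < q := lt_trans zero_lt_one hq
  set p : ℝ := q / (q - 1) with hp
  have hpq : p.HolderConjugate q := by
    rw [Real.holderConjugate_iff]
    constructor
    · rw [hp, lt_div_iff₀ (by linarith)]; linarith
    · rw [hp]; field_simp; ring
  set μ := volume.restrict (Set.Ioc c d) with hμ
  haveI : IsFiniteMeasure μ := by
    constructor
    rw [hμ, Measure.restrict_apply_univ]
    exact measure_Ioc_lt_top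
  set W1 : ℝ → ℝ := fun t => w t ^ (1/p) with hW1def
  set W2 : ℝ → ℝ := fun t => w t ^ (1/q) * G t with hW2def
  have hW1 : Continuous W1 := hw.rpow_const (fun x => Or.inr hpq.one_div_nonneg)
  have hW2 : Continuous W2 := (hw.rpow_const (fun x => Or.inr (by positivity))).mul hG
  obtain ⟨C1, hC1⟩ := (isCompact_Icc (a := c) (b := d)).exists_bound_of_continuousOn
    hW1.continuousOn
  obtain ⟨C2, hC2⟩ := (isCompact_Icc (a := c) (b := d)).exists_bound_of_continuousOn
    hW2.continuousOn
  have hmem : ∀ᵐ t ∂μ, t ∈ Set.Ioc c d := ae_restrict_mem measurableSet_Ioc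
  have hsub : Set.Ioc c d ⊆ Set.Icc c d := Set.Ioc_subset_Icc_self
  have h1 : MemLp W1 (ENNReal.ofReal p) μ := by
    apply MemLp.of_bound hW1.aestronglyMeasurable C1
    filter_upwards [hmem] with t ht using hC1 t (hsub ht)
  have h2 : MemLp W2 (ENNReal.ofReal q) μ := by
    apply MemLp.of_bound hW2.aestronglyMeasurable C2
    filter_upwards [hmem] with t ht using hC2 t (hsub ht)
  have hW1n : 0 ≤ᵐ[μ] W1 := by
    filter_upwards [hmem] with t ht
    exact Real.rpow_nonneg (hw0 t (hsub ht)) _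
  have hW2n : 0 ≤ᵐ[μ] W2 := by
    filter_upwards [hmem] with t ht
    exact mul_nonneg (Real.rpow_nonneg (hw0 t (hsub ht)) _) (hG0 t (hsub ht))
  have key := MeasureTheory.integral_mul_le_Lp_mul_Lq_of_nonneg hpq hW1n hW2n h1 h2
  have e1 : ∫ a, W1 a * W2 a ∂μ = ∫ t in c..d, w t * G t := by
    rw [intervalIntegral.integral_of_le hcd]
    apply MeasureTheory.integral_congr_ae
    have hsum : 1/p + 1/q = 1 := by
      rw [one_div, one_div]; exact hpq.inv_add_inv_eq_one
    filter_upwards [hmem] with t ht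
    have h0 := hw0 t (hsub ht)
    rw [hW1def, hW2def]
    dsimp only
    rw [← mul_assoc, ← Real.rpow_add' h0 (by rw [hsum]; norm_num), hsum, Real.rpow_one]
  have e2 : ∫ a, W1 a ^ p ∂μ = ∫ t in c..d, w t := by
    rw [intervalIntegral.integral_of_le hcd]
    apply MeasureTheory.integral_congr_ae
    filter_upwards [hmem] with t ht
    have h0 := hw0 t (hsub ht)
    rw [hW1def]
    dsimp only
    rw [← Real.rpow_mul h0, one_div_mul_cancel hpq.ne_zero, Real.rpow_one]
  have e3 : ∫ a, W2 a ^ q ∂μ = ∫ t in c..d, w t * G t ^ q := by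
    rw [intervalIntegral.integral_of_le hcd]
    apply MeasureTheory.integral_congr_ae
    filter_upwards [hmem] with t ht
    have h0 := hw0 t (hsub ht)
    rw [hW2def]
    dsimp only
    rw [Real.mul_rpow (Real.rpow_nonneg h0 _) (hG0 t (hsub ht)),
      ← Real.rpow_mul h0, one_div_mul_cancel hq0.ne', Real.rpow_one]
  have hep : (1:ℝ) - 1/q = 1/p := by
    rw [one_div, one_div]; rw [← hpq.inv_add_inv_eq_one]; ring
  rw [hep]
  calc ∫ t in c..d, w t * G t = ∫ a, W1 a * W2 a ∂μ := e1.symm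
    _ ≤ (∫ a, W1 a ^ p ∂μ) ^ (1/p) * (∫ a, W2 a ^ q ∂μ) ^ (1/q) := key
    _ = (∫ t in c..d, w t) ^ (1/p) * (∫ t in c..d, w t * G t ^ q) ^ (1/q) := by
        rw [e2, e3]

lemma rpow_abs_le {q x c : ℝ} (hq : 1 ≤ q) (hc : 0 ≤ c) (hx : |x| ^ q ≤ c) :
    |x| ≤ c ^ (1/q) := by
  have hq0 : (0:ℝ) < q := lt_of_lt_of_le one_pos hq
  have h := Real.rpow_le_rpow (Real.rpow_nonneg (abs_nonneg x) q) hx (by positivity : (0:ℝ) ≤ 1/q)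
  rwa [← Real.rpow_mul (abs_nonneg x), mul_one_div_cancel hq0.ne', Real.rpow_one] at h

lemma side_bound {q A B : ℝ} (hq : 1 ≤ q) (hA : 0 ≤ A) (hB : 0 ≤ B) {c d M : ℝ} (hcd : c ≤ d)
    {w : ℝ → ℝ} (hw : Continuous w) (hw0 : ∀ t ∈ Set.Icc c d, 0 ≤ w t)
    (hsub : Set.Icc c d ⊆ Set.Icc 0 1)
    (hw1 : (∫ t in c..d, w t) = 1/8)
    (hw2 : (∫ t in c..d, w t * ((1-t)*A + t*B)) = (1/8) * M)
    (hM : 0 ≤ M) :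
    ∫ t in c..d, w t * ((1-t)*A + t*B) ^ (1/q) ≤ (1/8) * M ^ (1/q) := by
  have hq0 : (0:ℝ) < q := lt_of_lt_of_le one_pos hq
  have hbase : ∀ t ∈ Set.Icc c d, 0 ≤ (1-t)*A + t*B := by
    intro t ht
    obtain ⟨h0, h1⟩ := hsub ht
    exact add_nonneg (mul_nonneg (by linarith) hA) (mul_nonneg h0 hB)
  rcases eq_or_lt_of_le hq with h1 | h1
  · rw [← h1]
    norm_num
    rw [hw2]
  · have hGc : Continuous (fun t : ℝ => ((1-t)*A + t*B) ^ (1/q)) := by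
      apply Continuous.rpow_const (by continuity)
      intro x; right; positivity
    have hG0 : ∀ t ∈ Set.Icc c d, 0 ≤ ((1-t)*A + t*B) ^ (1/q) :=
      fun t ht => Real.rpow_nonneg (hbase t ht) _
    have key := holder_aux h1 hcd hw hGc hw0 hG0
    have e : (∫ t in c..d, w t * (((1-t)*A + t*B) ^ (1/q)) ^ q)
        = ∫ t in c..d, w t * ((1-t)*A + t*B) := by
      apply intervalIntegral.integral_congr
      intro t ht
      rw [Set.uIcc_of_le hcd] at ht
      dsimp only
      rw [← Real.rpow_mul (hbase t ht), one_div_mul_cancel hq0.ne', Real.rpow_one]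
    rw [e, hw1, hw2] at key
    calc ∫ t in c..d, w t * ((1-t)*A + t*B) ^ (1/q)
        ≤ ((1:ℝ)/8) ^ (1 - 1/q) * ((1/8) * M) ^ (1/q) := key
      _ = (1/8) * M ^ (1/q) := by
          rw [Real.mul_rpow (by norm_num) hM, ← mul_assoc,
            ← Real.rpow_add (by norm_num : (0:ℝ) < 1/8)]
          norm_num

theorem hh_left_preinvex_q_pow_deriv
    (K : Set ℝ) (hK : IsOpen K) (η : ℝ → ℝ → ℝ)
    (f f' : ℝ → ℝ) (a b : ℝ) (q : ℝ) (hq : 1 ≤ q)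
    (hinvex : ∀ t ∈ Set.Icc (0 : ℝ) 1, a + t * η b a ∈ K)
    (hf : ∀ x ∈ K, HasDerivAt f (f' x) x)
    (hη : 0 < η b a)
    (hpre : ∀ t ∈ Set.Icc (0 : ℝ) 1,
      |f' (a + t * η b a)| ^ q ≤ (1 - t) * |f' a| ^ q + t * |f' b| ^ q) :
    |(1 / η b a) * (∫ x in a..(a + η b a), f x) - f ((2 * a + η b a) / 2)|
      ≤ (η b a / 8) *
        (((2 * |f' a| ^ q + |f' b| ^ q) / 3) ^ (1 / q) +
         ((|f' a| ^ q + 2 * |f' b| ^ q) / 3) ^ (1 / q)) := by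
  have hq0 : (0:ℝ) < q := lt_of_lt_of_le one_pos hq
  set h : ℝ := η b a with hh
  set A : ℝ := |f' a| ^ q with hA
  set B : ℝ := |f' b| ^ q with hB
  have hA0 : 0 ≤ A := Real.rpow_nonneg (abs_nonneg _) _
  have hB0 : 0 ≤ B := Real.rpow_nonneg (abs_nonneg _) _
  set F : ℝ → ℝ := fun t => f' (a + h * t) with hF
  set g : ℝ → ℝ := fun t => f (a + h * t) with hg
  have hmemK : ∀ t ∈ Set.Icc (0:ℝ) 1, a + h * t ∈ K := by
    intro t ht; rw [mul_comm]; exact hinvex t ht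
  have hpre' : ∀ t ∈ Set.Icc (0:ℝ) 1, |F t| ^ q ≤ (1 - t) * A + t * B := by
    intro t ht
    have := hpre t ht
    rw [hF]; dsimp only; rw [mul_comm h t]
    exact this
  -- derivative of g
  have hgderiv : ∀ t ∈ Set.Icc (0:ℝ) 1, HasDerivAt g (h * F t) t := by
    intro t ht
    have h1 : HasDerivAt (fun t : ℝ => a + h * t) h t := by
      simpa using ((hasDerivAt_id t).const_mul h).const_add a
    have h2 := (hf _ (hmemK t ht)).comp t h1
    simpa [hg, hF, mul_comm, Function.comp_def] using h2
  -- continuity of g on Icc 0 1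
  have hgc : ∀ t ∈ Set.Icc (0:ℝ) 1, ContinuousAt g t := by
    intro t ht
    exact (hgderiv t ht).continuousAt
  -- measurability and bound of F
  have hbnd : ∀ t ∈ Set.Icc (0:ℝ) 1, |F t| ≤ (A + B) ^ (1/q) := by
    intro t ht
    apply rpow_abs_le hq (by linarith)
    refine le_trans (hpre' t ht) ?_
    nlinarith [ht.1, ht.2, mul_nonneg ht.1 hA0, mul_nonneg ht.1 hB0]
  have hFmeas : AEStronglyMeasurable F (volume.restrict (Set.Ioc (0:ℝ) 1)) := by
    have hm : Measurable (fun t : ℝ => deriv f (a + h * t)) :=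
      (measurable_deriv f).comp (measurable_const.add (measurable_id.const_mul h))
    apply hm.aestronglyMeasurable.congr
    filter_upwards [ae_restrict_mem measurableSet_Ioc] with t ht
    exact ((hf _ (hmemK t ⟨ht.1.le, ht.2⟩)).deriv)
  -- integrability of products φ * F and φ * |F|
  have hmul : ∀ (G : ℝ → ℝ), (AEStronglyMeasurable G (volume.restrict (Set.Ioc (0:ℝ) 1))) →
      (∀ t ∈ Set.Icc (0:ℝ) 1, ‖G t‖ ≤ (A + B) ^ (1/q)) →
      ∀ (φ : ℝ → ℝ), Continuous φ → ∀ c d : ℝ, Set.uIcc c d ⊆ Set.Icc 0 1 →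
      IntervalIntegrable (fun t => φ t * G t) volume c d := by
    intro G hGm hGb φ hφ c d hsub
    obtain ⟨Cφ, hCφ⟩ := (isCompact_Icc (a := (0:ℝ)) (b := 1)).exists_bound_of_continuousOn
      hφ.continuousOn
    have hCφ0 : 0 ≤ Cφ := le_trans (norm_nonneg _) (hCφ 0 (by norm_num))
    have hint : IntegrableOn (fun t => φ t * G t) (Set.Ioc (0:ℝ) 1) := by
      apply Integrable.mono' (g := fun _ => Cφ * (A + B) ^ (1/q))
        (integrableOn_const measure_Ioc_lt_top.ne)
        (hφ.aestronglyMeasurable.mul hGm)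
      filter_upwards [ae_restrict_mem measurableSet_Ioc] with t ht
      have ht' : t ∈ Set.Icc (0:ℝ) 1 := ⟨ht.1.le, ht.2⟩
      simp only [Pi.mul_apply]
      rw [norm_mul]
      exact mul_le_mul (hCφ t ht') (hGb t ht') (norm_nonneg _) hCφ0
    rw [intervalIntegrable_iff]
    apply hint.mono_set
    have h1 := hsub Set.left_mem_uIcc
    have h2 := hsub Set.right_mem_uIcc
    rw [Set.uIoc]
    exact Set.Ioc_subset_Ioc (le_min h1.1 h2.1) (max_le h1.2 h2.2)
  have habs : ∀ t ∈ Set.Icc (0:ℝ) 1, ‖|F t|‖ ≤ (A + B) ^ (1/q) := by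
    intro t ht; rw [Real.norm_eq_abs, abs_abs]; exact hbnd t ht
  have hFb : ∀ t ∈ Set.Icc (0:ℝ) 1, ‖F t‖ ≤ (A + B) ^ (1/q) := by
    intro t ht; rw [Real.norm_eq_abs]; exact hbnd t ht
  have hFabsmeas : AEStronglyMeasurable (fun t => |F t|) (volume.restrict (Set.Ioc (0:ℝ) 1)) := by
    have := hFmeas.norm
    simpa [Real.norm_eq_abs] using this
  have hsub1 : Set.uIcc (0:ℝ) (1/2) ⊆ Set.Icc 0 1 := by
    rw [Set.uIcc_of_le (by norm_num)]
    exact Set.Icc_subset_Icc (le_refl _) (by norm_num)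
  have hsub2 : Set.uIcc (1/2:ℝ) 1 ⊆ Set.Icc 0 1 := by
    rw [Set.uIcc_of_le (by norm_num)]
    exact Set.Icc_subset_Icc (by norm_num) (le_refl _)
  have hgint : ∀ c d : ℝ, Set.uIcc c d ⊆ Set.Icc 0 1 → IntervalIntegrable g volume c d := by
    intro c d hsub
    apply ContinuousOn.intervalIntegrable
    intro t ht
    exact ((hgc t (hsub ht)).continuousWithinAt)
  -- integration by parts on [0, 1/2]
  have P1 : ∫ t in (0:ℝ)..(1/2), t * (h * F t)
      = (1/2) * g (1/2) - 0 * g 0 - ∫ t in (0:ℝ)..(1/2), 1 * g t := by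
    apply intervalIntegral.integral_mul_deriv_eq_deriv_mul
      (fun x hx => hasDerivAt_id x) (fun x hx => hgderiv x (hsub1 hx))
      intervalIntegrable_const
    exact hmul F hFmeas hFb (fun _ => h) continuous_const 0 (1/2) hsub1
  have P2 : ∫ t in (1/2:ℝ)..1, (t - 1) * (h * F t)
      = (1 - 1) * g 1 - (1/2 - 1) * g (1/2) - ∫ t in (1/2:ℝ)..1, 1 * g t := by
    apply intervalIntegral.integral_mul_deriv_eq_deriv_mul
      (fun x hx => (hasDerivAt_id x).sub_const 1) (fun x hx => hgderiv x (hsub2 hx))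
      intervalIntegrable_const
    exact hmul F hFmeas hFb (fun _ => h) continuous_const (1/2) 1 hsub2
  have hadj : (∫ t in (0:ℝ)..(1/2), g t) + ∫ t in (1/2:ℝ)..1, g t = ∫ t in (0:ℝ)..1, g t :=
    intervalIntegral.integral_add_adjacent_intervals (hgint 0 (1/2) hsub1) (hgint (1/2) 1 hsub2)
  -- substitution
  have hsubst : ∫ t in (0:ℝ)..1, g t = h⁻¹ * ∫ x in a..(a + h), f x := by
    rw [hg]
    have := intervalIntegral.integral_comp_add_mul f (ne_of_gt hη) a (a := (0:ℝ)) (b := 1)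
    rw [this]
    norm_num
  have hmid : g (1/2) = f ((2 * a + h) / 2) := by
    rw [hg]; dsimp only; congr 1; ring
  -- the identity
  have hiden : (1 / h) * (∫ x in a..(a + h), f x) - f ((2 * a + h) / 2)
      = -((∫ t in (0:ℝ)..(1/2), t * (h * F t)) + ∫ t in (1/2:ℝ)..1, (t - 1) * (h * F t)) := by
    rw [P1, P2]
    simp only [one_mul]
    rw [← hmid, one_div, ← hsubst, ← hadj]
    ring
  -- pointwise bound via the preinvexity hypothesis
  have hφc : Continuous (fun t : ℝ => ((1-t)*A + t*B) ^ (1/q)) := by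
    apply Continuous.rpow_const (by fun_prop)
    intro x; right; positivity
  have hφ0 : ∀ t ∈ Set.Icc (0:ℝ) 1, 0 ≤ (1-t)*A + t*B := fun t ht =>
    add_nonneg (mul_nonneg (by linarith [ht.2]) hA0) (mul_nonneg ht.1 hB0)
  have hFφ : ∀ t ∈ Set.Icc (0:ℝ) 1, |F t| ≤ ((1-t)*A + t*B) ^ (1/q) := fun t ht =>
    rpow_abs_le hq (hφ0 t ht) (hpre' t ht)
  set X : ℝ := ((2*A + B)/3) ^ (1/q) with hXdef
  set Y : ℝ := ((A + 2*B)/3) ^ (1/q) with hYdef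
  -- explicit polynomial integrals
  have hw1a : (∫ t in (0:ℝ)..(1/2), t) = 1/8 := by
    rw [integral_id]; norm_num
  have hw2a : (∫ t in (0:ℝ)..(1/2), t * ((1-t)*A + t*B)) = 1/8 * ((2*A+B)/3) := by
    have e : ∀ t:ℝ, t * ((1-t)*A + t*B) = A * t + (B - A) * t^2 := fun t => by ring
    simp only [e]
    rw [intervalIntegral.integral_add
        ((by fun_prop : Continuous fun t:ℝ => A * t).intervalIntegrable _ _)
        ((by fun_prop : Continuous fun t:ℝ => (B - A) * t^2).intervalIntegrable _ _),
      intervalIntegral.integral_const_mul, intervalIntegral.integral_const_mul,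
      integral_id, integral_pow]
    norm_num
    ring
  have hw1b : (∫ t in (1/2:ℝ)..1, (1 - t)) = 1/8 := by
    have e : (∫ t in (1/2:ℝ)..1, (1 - t)) = (∫ t in (1/2:ℝ)..1, (1:ℝ)) - ∫ t in (1/2:ℝ)..1, t :=
      intervalIntegral.integral_sub intervalIntegrable_const
        ((by fun_prop : Continuous fun t:ℝ => t).intervalIntegrable _ _)
    rw [e, integral_id, intervalIntegral.integral_const]
    norm_num
  have hw2b : (∫ t in (1/2:ℝ)..1, (1 - t) * ((1-t)*A + t*B)) = 1/8 * ((A+2*B)/3) := by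
    have e : ∀ t:ℝ, (1 - t) * ((1-t)*A + t*B) = (A + (B - 2*A) * t) + (A - B) * t^2 :=
      fun t => by ring
    simp only [e]
    rw [intervalIntegral.integral_add
        ((by fun_prop : Continuous fun t:ℝ => A + (B - 2*A) * t).intervalIntegrable _ _)
        ((by fun_prop : Continuous fun t:ℝ => (A - B) * t^2).intervalIntegrable _ _),
      intervalIntegral.integral_add intervalIntegrable_const
        ((by fun_prop : Continuous fun t:ℝ => (B - 2*A) * t).intervalIntegrable _ _),
      intervalIntegral.integral_const_mul, intervalIntegral.integral_const_mul,
      integral_id, integral_pow, intervalIntegral.integral_const]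
    norm_num
    ring
  -- bound the first piece
  have hb1 : |∫ t in (0:ℝ)..(1/2), t * (h * F t)| ≤ h * (1/8 * X) := by
    have e1 : (∫ t in (0:ℝ)..(1/2), |t * (h * F t)|) = h * ∫ t in (0:ℝ)..(1/2), t * |F t| := by
      rw [← intervalIntegral.integral_const_mul]
      apply intervalIntegral.integral_congr
      intro t ht
      have ht' := hsub1 ht
      dsimp only
      rw [abs_mul, abs_mul, abs_of_nonneg ht'.1, abs_of_pos hη]
      ring
    calc |∫ t in (0:ℝ)..(1/2), t * (h * F t)|
        ≤ ∫ t in (0:ℝ)..(1/2), |t * (h * F t)| :=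
          intervalIntegral.abs_integral_le_integral_abs (by norm_num)
      _ = h * ∫ t in (0:ℝ)..(1/2), t * |F t| := e1
      _ ≤ h * ∫ t in (0:ℝ)..(1/2), t * ((1-t)*A + t*B) ^ (1/q) := by
          apply mul_le_mul_of_nonneg_left _ hη.le
          apply intervalIntegral.integral_mono_on (by norm_num)
            (hmul (fun t => |F t|) hFabsmeas habs (fun t => t) continuous_id 0 (1/2) hsub1)
            ((continuous_id.mul hφc).intervalIntegrable _ _)
          intro t ht
          have ht' : t ∈ Set.Icc (0:ℝ) 1 := ⟨ht.1, le_trans ht.2 (by norm_num)⟩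
          exact mul_le_mul_of_nonneg_left (hFφ t ht') ht.1
      _ ≤ h * (1/8 * X) := by
          apply mul_le_mul_of_nonneg_left _ hη.le
          exact side_bound hq hA0 hB0 (by norm_num) continuous_id
            (fun t ht => ht.1) (Set.Icc_subset_Icc le_rfl (by norm_num))
            hw1a hw2a (by positivity)
  -- bound the second piece
  have hb2 : |∫ t in (1/2:ℝ)..1, (t - 1) * (h * F t)| ≤ h * (1/8 * Y) := by
    have e2 : (∫ t in (1/2:ℝ)..1, |(t - 1) * (h * F t)|)
        = h * ∫ t in (1/2:ℝ)..1, (1 - t) * |F t| := by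
      rw [← intervalIntegral.integral_const_mul]
      apply intervalIntegral.integral_congr
      intro t ht
      have ht' := hsub2 ht
      dsimp only
      rw [abs_mul, abs_mul, abs_of_nonpos (by linarith [ht'.2] : t - 1 ≤ 0), abs_of_pos hη]
      ring
    calc |∫ t in (1/2:ℝ)..1, (t - 1) * (h * F t)|
        ≤ ∫ t in (1/2:ℝ)..1, |(t - 1) * (h * F t)| :=
          intervalIntegral.abs_integral_le_integral_abs (by norm_num)
      _ = h * ∫ t in (1/2:ℝ)..1, (1 - t) * |F t| := e2
      _ ≤ h * ∫ t in (1/2:ℝ)..1, (1 - t) * ((1-t)*A + t*B) ^ (1/q) := by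
          apply mul_le_mul_of_nonneg_left _ hη.le
          apply intervalIntegral.integral_mono_on (by norm_num)
            (hmul (fun t => |F t|) hFabsmeas habs (fun t => 1 - t)
              (by fun_prop) (1/2) 1 hsub2)
            (((by fun_prop : Continuous fun t:ℝ => 1 - t).mul hφc).intervalIntegrable _ _)
          intro t ht
          have ht' : t ∈ Set.Icc (0:ℝ) 1 := ⟨le_trans (by norm_num) ht.1, ht.2⟩
          exact mul_le_mul_of_nonneg_left (hFφ t ht') (by show (0:ℝ) ≤ 1 - t; linarith [ht.2])
      _ ≤ h * (1/8 * Y) := by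
          apply mul_le_mul_of_nonneg_left _ hη.le
          exact side_bound hq hA0 hB0 (by norm_num) (by fun_prop)
            (fun t ht => by show (0:ℝ) ≤ 1 - t; linarith [ht.2]) (Set.Icc_subset_Icc (by norm_num) le_rfl)
            hw1b hw2b (by positivity)
  calc |(1 / h) * (∫ x in a..(a + h), f x) - f ((2 * a + h) / 2)|
      = |-((∫ t in (0:ℝ)..(1/2), t * (h * F t)) + ∫ t in (1/2:ℝ)..1, (t - 1) * (h * F t))| := by
        rw [hiden]
    _ = |(∫ t in (0:ℝ)..(1/2), t * (h * F t)) + ∫ t in (1/2:ℝ)..1, (t - 1) * (h * F t)| :=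
        abs_neg _
    _ ≤ |∫ t in (0:ℝ)..(1/2), t * (h * F t)| + |∫ t in (1/2:ℝ)..1, (t - 1) * (h * F t)| :=
        abs_add_le _ _
    _ ≤ h * (1/8 * X) + h * (1/8 * Y) := add_le_add hb1 hb2
    _ = h / 8 * (X + Y) := by ring
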